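/- Assume the pm×pm block Toeplitz matrix T is invertible and J ∈ ℝ^{m×m} is invertible, and let Φ̃_{p,1}, …, Φ̃_{p,p} ∈ ℝ^{m×m} satisfy the backward Yule–Walker equations. Let Φ_{p,1}, …, Φ_{p,p} ∈ ℝ^{m×m} be fixed, let L_1, …, L_p : ℝ^{m×m} → ℝ^{m×m} be linear maps, and define Φ_{p+1,r}(A) = Φ_{p,r} + L_r(A) for A ∈ ℝ^{m×m}. If for every u, v ∈ {1,…,m} the derivative matrices D_r^{(u,v)} := L_r(E_{u,v}) satisfy the orthogonality equations, then L_r(A) = A Φ̃_{p,p+1−r} for every A ∈ ℝ^{m×m} and every r = 1,…,p; that is, Whittle's forward recursion Φ_{p+1,r}(A) = Φ_{p,r} + A Φ̃_{p,p+1−r} is the unique linear transformation ensuring the local orthogonality condition. -/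

import Mathlib

private lemma icc_sum_fin {α : Type*} [AddCommMonoid α] (p : ℕ) (g : ℕ → α) :
    ∑ r ∈ Finset.Icc 1 p, g r = ∑ a : Fin p, g ((a : ℕ) + 1) := by
  rw [← Finset.Ico_add_one_right_eq_Icc, Finset.sum_Ico_eq_sum_range,
    Fin.sum_univ_eq_sum_range (fun i => g (i + 1))]
  simp [add_comm]

/-- `Φ̃_{p,1}, …, Φ̃_{p,p}` satisfy the backward Yule–Walker equations:
`∑_{r=1}^p ∑_ℓ (Φ̃_{p,p+1−r})_{(i,ℓ)} (Γ_{s−r})_{(ℓ,j)} = −(Γ_{s−p−1})_{(i,j)}`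
for all `s = 1,…,p` and `i,j = 1,…,m`. -/
def BackwardYW (m p : ℕ) (Γ : ℤ → Matrix (Fin m) (Fin m) ℝ)
    (Φt : ℕ → Matrix (Fin m) (Fin m) ℝ) : Prop :=
  ∀ s ∈ Finset.Icc 1 p, ∀ i j : Fin m,
    ∑ r ∈ Finset.Icc 1 p, ∑ ℓ : Fin m,
      Φt (p + 1 - r) i ℓ * Γ ((s : ℤ) - (r : ℤ)) ℓ j
    = -Γ ((s : ℤ) - (p : ℤ) - 1) i j

/-- The family `(D_r^{(u,v)})` satisfies the orthogonality equations:
`∑_{r=1}^p ∑_k ∑_ℓ J_{(k,i)} (Γ_{s−r})_{(ℓ,j)} (D_r^{(u,v)})_{(k,ℓ)}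
  = −J_{(u,i)} (Γ_{s−p−1})_{(v,j)}`
for all `s = 1,…,p` and `i,j,u,v = 1,…,m`. -/
def OrthogonalityEqs (m p : ℕ) (Γ : ℤ → Matrix (Fin m) (Fin m) ℝ)
    (J : Matrix (Fin m) (Fin m) ℝ)
    (D : ℕ → Fin m → Fin m → Matrix (Fin m) (Fin m) ℝ) : Prop :=
  ∀ s ∈ Finset.Icc 1 p, ∀ i j u v : Fin m,
    ∑ r ∈ Finset.Icc 1 p, ∑ k : Fin m, ∑ ℓ : Fin m,
      J k i * Γ ((s : ℤ) - (r : ℤ)) ℓ j * D r u v k ℓ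
    = -(J u i * Γ ((s : ℤ) - (p : ℤ) - 1) v j)

open Matrix

/-- Uniqueness of Whittle's forward recursion among linear transformations: if the
block Toeplitz matrix `T` and `J` are invertible, `Φ̃_{p,1}, …, Φ̃_{p,p}` satisfy the
backward Yule–Walker equations, and the linear maps `L_r` are such that the derivative
matrices `D_r^{(u,v)} = L_r(E_{u,v})` satisfy the orthogonality equations, then
`L_r(A) = A Φ̃_{p,p+1−r}` for every `A`, i.e. the transformation
`Φ_{p+1,r}(A) = Φ_{p,r} + L_r(A)` is exactly Whittle's forward recursion
`Φ_{p+1,r}(A) = Φ_{p,r} + A Φ̃_{p,p+1−r}`. -/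
theorem stmt16 {m p : ℕ} (hm : 1 ≤ m) (hp : 1 ≤ p)
    (Γ : ℤ → Matrix (Fin m) (Fin m) ℝ)
    (hT : IsUnit (Matrix.of fun a b : Fin p × Fin m =>
      Γ ((b.1 : ℤ) - (a.1 : ℤ)) a.2 b.2))
    (J : Matrix (Fin m) (Fin m) ℝ) (hJ : IsUnit J)
    (Φt : ℕ → Matrix (Fin m) (Fin m) ℝ)
    (hYW : BackwardYW m p Γ Φt)
    (Φ : ℕ → Matrix (Fin m) (Fin m) ℝ)
    (L : ℕ → Matrix (Fin m) (Fin m) ℝ →ₗ[ℝ] Matrix (Fin m) (Fin m) ℝ)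
    (Φnext : ℕ → Matrix (Fin m) (Fin m) ℝ → Matrix (Fin m) (Fin m) ℝ)
    (hΦnext : ∀ r A, Φnext r A = Φ r + L r A)
    (hD : OrthogonalityEqs m p Γ J
      (fun r u v => L r (Matrix.single u v (1 : ℝ)))) :
    ∀ A : Matrix (Fin m) (Fin m) ℝ, ∀ r ∈ Finset.Icc 1 p,
      L r A = A * Φt (p + 1 - r) ∧
      Φnext r A = Φ r + A * Φt (p + 1 - r) := by
  have hdetJ : IsUnit J.det := (Matrix.isUnit_iff_isUnit_det J).mp hJ
  set T : Matrix (Fin p × Fin m) (Fin p × Fin m) ℝ :=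
    Matrix.of (fun a b : Fin p × Fin m => Γ ((b.1 : ℤ) - (a.1 : ℤ)) a.2 b.2) with hTdef
  have hdetT : IsUnit T.det := (Matrix.isUnit_iff_isUnit_det T).mp hT
  have key : ∀ u v : Fin m, ∀ r ∈ Finset.Icc 1 p,
      L r (Matrix.single u v (1:ℝ)) =
        Matrix.single u v (1:ℝ) * Φt (p + 1 - r) := by
    intro u v
    set E : Matrix (Fin m) (Fin m) ℝ := Matrix.single u v (1:ℝ) with hE
    set X : ℕ → Matrix (Fin m) (Fin m) ℝ := fun r => L r E - E * Φt (p + 1 - r) with hXdef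
    have hEmul : ∀ (M : Matrix (Fin m) (Fin m) ℝ) (k ℓ : Fin m),
        (E * M) k ℓ = if u = k then M v ℓ else 0 := by
      intro M k ℓ
      simp [hE, Matrix.mul_apply, Matrix.single, ite_and, boole_mul]
    have h1 : ∀ s ∈ Finset.Icc 1 p, ∀ i j : Fin m,
        ∑ r ∈ Finset.Icc 1 p, ∑ k : Fin m, ∑ ℓ : Fin m,
          J k i * Γ ((s:ℤ) - (r:ℤ)) ℓ j * X r k ℓ = 0 := by
      intro s hs i j
      have hd := hD s hs i j u v
      have hy := hYW s hs v j
      have hE1 : ∀ r ∈ Finset.Icc 1 p,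
          (∑ k : Fin m, ∑ ℓ : Fin m,
            J k i * Γ ((s:ℤ)-(r:ℤ)) ℓ j * (E * Φt (p+1-r)) k ℓ)
          = J u i * ∑ ℓ : Fin m, Φt (p+1-r) v ℓ * Γ ((s:ℤ)-(r:ℤ)) ℓ j := by
        intro r _
        rw [Finset.sum_comm, Finset.mul_sum]
        refine Finset.sum_congr rfl fun ℓ _ => ?_
        simp only [hEmul, mul_ite, mul_zero]
        rw [Finset.sum_ite_eq Finset.univ u
          (fun k => J k i * Γ ((s:ℤ)-(r:ℤ)) ℓ j * Φt (p+1-r) v ℓ)]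
        simp only [Finset.mem_univ, if_true]
        ring
      calc ∑ r ∈ Finset.Icc 1 p, ∑ k : Fin m, ∑ ℓ : Fin m,
            J k i * Γ ((s:ℤ) - (r:ℤ)) ℓ j * X r k ℓ
          = (∑ r ∈ Finset.Icc 1 p, ∑ k : Fin m, ∑ ℓ : Fin m,
              J k i * Γ ((s:ℤ)-(r:ℤ)) ℓ j * L r E k ℓ)
            - ∑ r ∈ Finset.Icc 1 p, ∑ k : Fin m, ∑ ℓ : Fin m,
              J k i * Γ ((s:ℤ)-(r:ℤ)) ℓ j * (E * Φt (p+1-r)) k ℓ := by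
            rw [← Finset.sum_sub_distrib]
            refine Finset.sum_congr rfl fun r _ => ?_
            rw [← Finset.sum_sub_distrib]
            refine Finset.sum_congr rfl fun k _ => ?_
            rw [← Finset.sum_sub_distrib]
            refine Finset.sum_congr rfl fun ℓ _ => ?_
            simp only [hXdef, Matrix.sub_apply]
            ring
        _ = -(J u i * Γ ((s:ℤ)-(p:ℤ)-1) v j)
            - J u i * ∑ r ∈ Finset.Icc 1 p, ∑ ℓ : Fin m,
                Φt (p+1-r) v ℓ * Γ ((s:ℤ)-(r:ℤ)) ℓ j := by
            rw [hd, Finset.sum_congr rfl hE1, ← Finset.mul_sum]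
        _ = 0 := by rw [hy]; ring
    have h2 : ∀ s ∈ Finset.Icc 1 p, ∀ j k : Fin m,
        ∑ r ∈ Finset.Icc 1 p, ∑ ℓ : Fin m, X r k ℓ * Γ ((s:ℤ)-(r:ℤ)) ℓ j = 0 := by
      intro s hs j k
      set Y : Fin m → ℝ := fun q =>
        ∑ r ∈ Finset.Icc 1 p, ∑ ℓ : Fin m, X r q ℓ * Γ ((s:ℤ)-(r:ℤ)) ℓ j with hYdef
      have hJY : Jᵀ *ᵥ Y = 0 := by
        funext i
        simp only [Matrix.mulVec, Matrix.transpose_apply, dotProduct, Pi.zero_apply]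
        calc ∑ q : Fin m, J q i * Y q
            = ∑ q : Fin m, ∑ r ∈ Finset.Icc 1 p, ∑ ℓ : Fin m,
                J q i * Γ ((s:ℤ)-(r:ℤ)) ℓ j * X r q ℓ := by
              refine Finset.sum_congr rfl fun q _ => ?_
              rw [hYdef, Finset.mul_sum]
              refine Finset.sum_congr rfl fun r _ => ?_
              rw [Finset.mul_sum]
              refine Finset.sum_congr rfl fun ℓ _ => ?_
              ring
          _ = 0 := by rw [Finset.sum_comm]; exact h1 s hs i j
      have hJTdet : IsUnit Jᵀ.det := by rwa [Matrix.det_transpose]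
      have hY0 : Y = 0 := by
        have h := congrArg (fun w => (Jᵀ)⁻¹ *ᵥ w) hJY
        simpa [Matrix.mulVec_mulVec, Matrix.nonsing_inv_mul _ hJTdet,
          Matrix.one_mulVec] using h
      exact congrFun hY0 k
    have h3 : ∀ r ∈ Finset.Icc 1 p, ∀ k ℓ : Fin m, X r k ℓ = 0 := by
      intro r hr k ℓ
      set Z : Fin p × Fin m → ℝ := fun a => X ((a.1 : ℕ) + 1) k a.2 with hZdef
      have hZT : Z ᵥ* T = 0 := by
        funext b
        simp only [Matrix.vecMul, dotProduct, Pi.zero_apply]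
        have hsmem : ((b.1 : ℕ) + 1) ∈ Finset.Icc 1 p := by
          simp only [Finset.mem_Icc]
          exact ⟨Nat.le_add_left 1 _, b.1.isLt⟩
        have h2' := h2 ((b.1:ℕ)+1) hsmem b.2 k
        rw [icc_sum_fin] at h2'
        rw [← h2', Fintype.sum_prod_type]
        refine Finset.sum_congr rfl fun a1 _ => Finset.sum_congr rfl fun a2 _ => ?_
        have harg : ((((b.1:ℕ)+1 : ℕ)):ℤ) - ((((a1:ℕ)+1 : ℕ)):ℤ)
            = ((b.1:ℕ):ℤ) - ((a1:ℕ):ℤ) := by push_cast; ring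
        rw [hZdef]
        simp only [hTdef, Matrix.of_apply]
        rw [harg]
      have hZ0 : Z = 0 := by
        have h := congrArg (fun w => w ᵥ* T⁻¹) hZT
        simpa [Matrix.vecMul_vecMul, Matrix.mul_nonsing_inv _ hdetT,
          Matrix.vecMul_one] using h
      obtain ⟨hr1, hr2⟩ := Finset.mem_Icc.mp hr
      have hlt : r - 1 < p := by omega
      have : X r k ℓ = Z (⟨r - 1, hlt⟩, ℓ) := by
        rw [hZdef]; congr 1; simp; omega
      rw [this, hZ0]; rfl
    intro r hr
    have : X r = 0 := by
      ext k ℓ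
      exact h3 r hr k ℓ
    have := sub_eq_zero.mp this
    simpa [hXdef] using sub_eq_zero.mp (by ext k ℓ; exact h3 r hr k ℓ)
  intro A r hr
  have hsb : ∀ u v : Fin m, Matrix.single u v (A u v)
      = A u v • Matrix.single u v (1:ℝ) := by
    intro u v
    ext a b
    simp [Matrix.single, Matrix.smul_apply, mul_ite, mul_one, mul_zero]
  have hLA : L r A = A * Φt (p + 1 - r) := by
    calc L r A = ∑ u : Fin m, ∑ v : Fin m,
          A u v • L r (Matrix.single u v (1:ℝ)) := by
          conv_lhs => rw [Matrix.matrix_eq_sum_single A]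
          rw [map_sum]
          refine Finset.sum_congr rfl fun u _ => ?_
          rw [map_sum]
          refine Finset.sum_congr rfl fun v _ => ?_
          rw [hsb u v, (L r).map_smul]
      _ = ∑ u : Fin m, ∑ v : Fin m,
          A u v • (Matrix.single u v (1:ℝ) * Φt (p+1-r)) := by
          refine Finset.sum_congr rfl fun u _ => Finset.sum_congr rfl fun v _ => ?_
          rw [key u v r hr]
      _ = (∑ u : Fin m, ∑ v : Fin m, Matrix.single u v (A u v)) * Φt (p+1-r) := by
          rw [Finset.sum_mul]
          refine Finset.sum_congr rfl fun u _ => ?_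
          rw [Finset.sum_mul]
          refine Finset.sum_congr rfl fun v _ => ?_
          rw [hsb u v, smul_mul_assoc]
      _ = A * Φt (p+1-r) := by rw [← Matrix.matrix_eq_sum_single A]
  exact ⟨hLA, by rw [hΦnext, hLA]⟩
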